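/- Let R be a finite commutative Frobenius ring of characteristic 2, let G be a finite abelian group of order n with a fixed enumeration of its elements, and let v1, v2 ∈ RG. If the code C_σ generated by the rows of M(σ) with A = 0 is self-dual, then v1 + v2 is a unitary unit in RG, i.e. (v1+v2)(v1+v2)* = 1. -/

import Mathlib

open Matrix

/-- The dual of a code (submodule of `ι → R`) with respect to the standard bilinear form. -/
def dualCode {R : Type*} [CommRing R] {ι : Type*} [Fintype ι]
    (C : Submodule R (ι → R)) : Submodule R (ι → R) where
  carrier := {x | ∀ c ∈ C, ∑ i, x i * c i = 0}
  add_mem' := by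
    intro a b ha hb c hc
    simp only [Set.mem_setOf_eq] at ha hb ⊢
    simp [Pi.add_apply, add_mul, Finset.sum_add_distrib, ha c hc, hb c hc]
  zero_mem' := by
    intro c hc
    simp
  smul_mem' := by
    intro r a ha c hc
    simp only [Set.mem_setOf_eq] at ha ⊢
    simp [Pi.smul_apply, smul_eq_mul, mul_assoc, ← Finset.mul_sum, ha c hc]

/-- A code is self-dual if it equals its dual. -/
def IsSelfDual {R : Type*} [CommRing R] {ι : Type*} [Fintype ι]
    (C : Submodule R (ι → R)) : Prop :=
  C = dualCode C

/-- The code generated by the rows of a matrix. -/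
def rowSpan {R : Type*} [CommRing R] {κ ι : Type*} (M : Matrix κ ι R) :
    Submodule R (ι → R) :=
  Submodule.span R (Set.range M)

/-- The matrix `σ(v)` of a group ring element `v` with respect to a fixed enumeration `e`
of the group elements: its `(i,j)` entry is the coefficient of `v` at `(e i)⁻¹ * (e j)`. -/
def sigma {R : Type*} [CommRing R] {G : Type*} [Group G] {ι : Type*}
    (e : ι ≃ G) (v : MonoidAlgebra R G) : Matrix ι ι R :=
  Matrix.of fun i j => v.coeff ((e i)⁻¹ * e j)

/-- The canonical involution `v ↦ v* = ∑ α_g g⁻¹` on a group ring. -/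
def invol {R : Type*} [CommRing R] {G : Type*} [Group G]
    (v : MonoidAlgebra R G) : MonoidAlgebra R G :=
  MonoidAlgebra.ofCoeff (Finsupp.equivMapDomain (Equiv.inv G) v.coeff)

lemma ma_add_apply {R : Type*} [CommRing R] {G : Type*} [Group G]
    (a b : MonoidAlgebra R G) (g : G) : (a + b).coeff g = a.coeff g + b.coeff g :=
  Finsupp.add_apply a.coeff b.coeff g

lemma mul_invol_apply {R : Type*} [CommRing R] {G : Type*} [Group G] [Fintype G]
    (v w : MonoidAlgebra R G) (x : G) :
    (v * invol w).coeff x = ∑ g : G, v.coeff g * w.coeff (x⁻¹ * g) := by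
  classical
  rw [MonoidAlgebra.coeff_mul]
  rw [Finsupp.sum_fintype _ _ (fun a => by simp [Finsupp.sum]) ]
  refine Finset.sum_congr rfl fun a _ => ?_
  rw [Finsupp.sum_fintype _ _ (fun b => by simp)]
  have : (∑ b : G, if a * b = x then v.coeff a * (invol w).coeff b else 0)
      = ∑ b : G, if b = a⁻¹ * x then v.coeff a * (invol w).coeff b else 0 := by
    refine Finset.sum_congr rfl fun b _ => ?_
    congr 1
    simp [eq_inv_mul_iff_mul_eq]
  rw [this, Finset.sum_ite_eq' Finset.univ (a⁻¹ * x)]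
  simp [invol, MonoidAlgebra.coeff_ofCoeff, Finsupp.equivMapDomain_apply, _root_.mul_inv_rev, mul_comm]

/-- Lemma 2.8: for a finite abelian group, if the code `C_σ` (with `A = 0`) is
self-dual, then `v₁ + v₂` is a unitary unit: `(v₁+v₂)(v₁+v₂)* = 1`. -/
theorem unitary_of_selfDual_A_eq_zero
    {R : Type*} [CommRing R] [Fintype R] [CharP R 2]
    (hFrob : Module.Injective R R)
    {n : ℕ} {G : Type*} [CommGroup G] [Fintype G] (e : Fin n ≃ G)
    (v1 v2 : MonoidAlgebra R G)
    (h : IsSelfDual (rowSpan (Matrix.fromCols (1 : Matrix (Fin n ⊕ Fin n) (Fin n ⊕ Fin n) R)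
        (Matrix.fromBlocks (sigma e v1) (sigma e v2) (sigma e v2) (sigma e v1))))) :
    (v1 + v2) * invol (v1 + v2) = 1 := by
  classical
  set X : Matrix (Fin n ⊕ Fin n) (Fin n ⊕ Fin n) R :=
    Matrix.fromBlocks (sigma e v1) (sigma e v2) (sigma e v2) (sigma e v1) with hX
  set M := Matrix.fromCols (1 : Matrix (Fin n ⊕ Fin n) (Fin n ⊕ Fin n) R) X with hM
  -- orthogonality of rows
  have hortho : ∀ r s, ∑ i, M r i * M s i = 0 := by
    intro r s
    have hmem : M s ∈ rowSpan M := Submodule.subset_span ⟨s, rfl⟩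
    rw [h] at hmem
    have := hmem (M r) (Submodule.subset_span ⟨r, rfl⟩)
    simpa [mul_comm] using this
  have key : ∀ r s, (if r = s then (1:R) else 0) + ∑ c, X r c * X s c = 0 := by
    intro r s
    have := hortho r s
    rw [Fintype.sum_sum_type] at this
    simpa [hM, Matrix.fromCols, Matrix.one_apply, Finset.sum_ite_eq'] using this
  ext x
  rw [mul_invol_apply]
  rw [← Equiv.sum_comp e (fun g => (v1 + v2).coeff g * (v1 + v2).coeff (x⁻¹ * g))]
  have h1 := key (Sum.inl (e.symm 1)) (Sum.inl (e.symm x))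
  have h2 := key (Sum.inl (e.symm 1)) (Sum.inr (e.symm x))
  rw [Fintype.sum_sum_type] at h1 h2
  simp only [hX, Matrix.fromBlocks_apply₁₁, Matrix.fromBlocks_apply₁₂,
    Matrix.fromBlocks_apply₂₁, Matrix.fromBlocks_apply₂₂, sigma, Matrix.of_apply,
    Equiv.apply_symm_apply, inv_one, one_mul, Sum.inl.injEq, reduceCtorEq, if_false] at h1 h2
  show (∑ k : Fin n, (v1 + v2).coeff (e k) * (v1 + v2).coeff (x⁻¹ * e k)) = _
  simp only [ma_add_apply, add_mul, mul_add, Finset.sum_add_distrib]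
  have hs12 : (∑ k, v1.coeff (e k) * v2.coeff (x⁻¹ * e k)) + ∑ k, v2.coeff (e k) * v1.coeff (x⁻¹ * e k) = 0 := by
    linear_combination h2
  have hs11 : (∑ k, v1.coeff (e k) * v1.coeff (x⁻¹ * e k)) + ∑ k, v2.coeff (e k) * v2.coeff (x⁻¹ * e k)
      = (if x = 1 then (1:R) else 0) := by
    have hδ : (if e.symm 1 = e.symm x then (1:R) else 0) = (if x = 1 then (1:R) else 0) := by
      simp [Equiv.symm_apply_eq, eq_comm]
    have h2' : -(if x = 1 then (1:R) else 0) = (if x = 1 then (1:R) else 0) := by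
      rw [CharTwo.neg_eq]
    linear_combination h1 - hδ + h2'
  rw [MonoidAlgebra.one_def, MonoidAlgebra.coeff_single, Finsupp.single_apply]
  have : ((if (1:G) = x then (1:R) else 0)) = (if x = 1 then (1:R) else 0) := by
    simp [eq_comm]
  rw [this]
  linear_combination hs11 + hs12
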